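/- Let F be a finite field and G a finite abelian group all of whose Sylow subgroups for the characteristic p of F are cyclic (e.g. p ∤ |G|). Then for every ideal I of FG there exist u, v ∈ FG with I = FG·u, Ann(u) = FG·v, and Ann(v) = FG·u. -/

import Mathlib

open MonoidAlgebra


/-- The annihilator of a single element of the group algebra. -/
def ann {F G : Type*} [Field F] [CommGroup G] (v : MonoidAlgebra F G) :
    Ideal (MonoidAlgebra F G) where
  carrier := {x | x * v = 0}
  add_mem' := by
    intro a b ha hb
    simp only [Set.mem_setOf_eq, add_mul] at *
    rw [ha, hb, add_zero]
  zero_mem' := by simp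
  smul_mem' := by
    intro c x hx
    simp only [Set.mem_setOf_eq, smul_eq_mul] at *
    rw [mul_assoc, hx, mul_zero]





section Nondeg
variable {F G : Type*} [Field F] [Group G]

lemma ma_eq_zero_of_forall (x : MonoidAlgebra F G)
    (h : ∀ y, (x * y).coeff 1 = 0) : x = 0 := by
  ext g
  have := h (MonoidAlgebra.single g⁻¹ 1)
  rw [MonoidAlgebra.coeff_mul_single_apply, inv_inv, one_mul, mul_one] at this
  simpa using this

end Nondeg

section Red

variable {F Q : Type*} [Field F] [CommGroup Q] [Fintype Q]

instance maFin : Module.Finite F (MonoidAlgebra F Q) :=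
  Module.Finite.equiv ((Finsupp.linearEquivFunOnFinite F F Q).symm.trans
    (MonoidAlgebra.coeffLinearEquiv F).symm)

lemma ma_isNilpotent_eq_zero (hcard : (Fintype.card Q : F) ≠ 0)
    (x : MonoidAlgebra F Q) (hx : IsNilpotent x) : x = 0 := by
  classical
  apply ma_eq_zero_of_forall
  intro y
  have hxy : IsNilpotent (x * y) := (Commute.all x y).isNilpotent_mul_right hx
  have hnilL : IsNilpotent (LinearMap.mulLeft F (x * y)) := by
    obtain ⟨n, hn⟩ := hxy
    exact ⟨n, by rw [LinearMap.pow_mulLeft, hn, LinearMap.mulLeft_zero_eq_zero]⟩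
  have htr : LinearMap.trace F (MonoidAlgebra F Q) (LinearMap.mulLeft F (x * y)) =
      (Fintype.card Q : F) * ((x * y).coeff 1) := by
    let b : Module.Basis Q F (MonoidAlgebra F Q) := Module.Basis.ofRepr (MonoidAlgebra.coeffLinearEquiv F)
    rw [LinearMap.trace_eq_matrix_trace F b]
    rw [Matrix.trace]
    have hdiag : ∀ q : Q, (LinearMap.toMatrix b b (LinearMap.mulLeft F (x * y))).diag q
        = (x * y).coeff 1 := by
      intro q
      rw [Matrix.diag_apply, LinearMap.toMatrix_apply]
      have hq : ((x * y) * (MonoidAlgebra.single q 1) : MonoidAlgebra F Q).coeff q = (x * y).coeff 1 := by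
        rw [MonoidAlgebra.coeff_mul_single_apply, mul_inv_cancel, mul_one]
      exact hq
    rw [Finset.sum_congr rfl (fun q _ => hdiag q), Finset.sum_const, Finset.card_univ,
      nsmul_eq_mul]
  have h0 : IsNilpotent ((Fintype.card Q : F) * ((x * y).coeff 1)) := by
    rw [← htr]
    exact LinearMap.isNilpotent_trace_of_isNilpotent hnilL
  have h1 : (Fintype.card Q : F) * ((x * y).coeff 1) = 0 := h0.eq_zero
  rcases mul_eq_zero.mp h1 with h | h
  · exact absurd h hcard
  · exact h

end Red

section Ker

variable {F G : Type*} [Field F] [CommGroup G] [Fintype G]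

lemma ma_ker_le_span (P : Subgroup G) (g : G)
    (hg : ∀ a : G, a ∈ P ↔ a ∈ Subgroup.zpowers g) (x : MonoidAlgebra F G)
    (hx : MonoidAlgebra.mapDomainRingHom F (QuotientGroup.mk' P) x = 0) :
    x ∈ Ideal.span {(MonoidAlgebra.single g 1 - 1 : MonoidAlgebra F G)} := by
  classical
  set t : MonoidAlgebra F G := MonoidAlgebra.single g 1 - 1 with hts
  set σ : G → G := fun a => (QuotientGroup.mk a : G ⧸ P).out with hσ
  have hsingle : ∀ (a : G) (b : F),
      (MonoidAlgebra.single a b - MonoidAlgebra.single (σ a) b : MonoidAlgebra F G)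
        ∈ Ideal.span {t} := by
    intro a b
    set c : G := σ a with hc
    have hmem : c⁻¹ * a ∈ P := by
      have houtc : (QuotientGroup.mk c : G ⧸ P) = QuotientGroup.mk a :=
        QuotientGroup.out_eq' _
    
      exact (QuotientGroup.eq (s := P)).mp houtc
    have hmem' : c⁻¹ * a ∈ Subgroup.zpowers g := (hg _).mp hmem
    have hfin : IsOfFinOrder g := isOfFinOrder_of_finite g
    have hpows : c⁻¹ * a ∈ Submonoid.powers g := hfin.mem_powers_iff_mem_zpowers.mpr hmem'
    obtain ⟨k, hk⟩ := hpows
    have hk' : g ^ k = c⁻¹ * a := hk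
    have ha : a = c * g ^ k := by rw [hk']; group
    have hfactor : (MonoidAlgebra.single a b - MonoidAlgebra.single c b : MonoidAlgebra F G) =
        MonoidAlgebra.single c b * (MonoidAlgebra.single (g ^ k) 1 - 1) := by
      rw [mul_sub, mul_one, MonoidAlgebra.single_mul_single, mul_one, ← ha]
    rw [hfactor]
    apply Ideal.mul_mem_left
    rw [Ideal.mem_span_singleton]
    have hp : (MonoidAlgebra.single (g ^ k) 1 : MonoidAlgebra F G) =
        (MonoidAlgebra.single g 1) ^ k := by
      rw [MonoidAlgebra.single_pow, one_pow]
    rw [hp, hts]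
    simpa using sub_dvd_pow_sub_pow (MonoidAlgebra.single g 1 : MonoidAlgebra F G) 1 k
  have hΘ : ∃ Θ : MonoidAlgebra F G →ₗ[F] MonoidAlgebra F G,
      ∀ y, Θ y = MonoidAlgebra.mapDomain σ y := ⟨MonoidAlgebra.mapDomainLinearMap F F σ, fun _ => rfl⟩
  obtain ⟨Θ, hΘ⟩ := hΘ
  have key : ∀ y : MonoidAlgebra F G, y - Θ y ∈ Ideal.span {t} := by
    intro y
    have hy2 : Θ y = ∑ a ∈ y.coeff.support, MonoidAlgebra.single (σ a) (y.coeff a) := by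
      rw [hΘ y, MonoidAlgebra.mapDomain, Finsupp.mapDomain, Finsupp.sum, MonoidAlgebra.ofCoeff_sum]; rfl
    have hy1 : y = ∑ a ∈ y.coeff.support, MonoidAlgebra.single a (y.coeff a) :=
      MonoidAlgebra.coeff_injective (by rw [MonoidAlgebra.coeff_sum]; exact (Finsupp.sum_single y.coeff).symm)
    have hsum : ∑ a ∈ y.coeff.support,
        (MonoidAlgebra.single a (y.coeff a) - MonoidAlgebra.single (σ a) (y.coeff a)) ∈ Ideal.span {t} :=
      Ideal.sum_mem _ fun a _ => hsingle a (y.coeff a)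
    have heq : y - Θ y = ∑ a ∈ y.coeff.support,
        (MonoidAlgebra.single a (y.coeff a) - MonoidAlgebra.single (σ a) (y.coeff a)) := by
      rw [Finset.sum_sub_distrib, ← hy2]
      exact congrArg (· - Θ y) hy1
    rw [heq]
    exact hsum
  have h2 := key x
  have h3 : Θ x = 0 := by
    rw [hΘ x]
    show (MonoidAlgebra.mapDomain σ x : MonoidAlgebra F G) = 0
    have hcomp : σ = (Quotient.out : G ⧸ P → G) ∘ (QuotientGroup.mk : G → G ⧸ P) := rfl
    rw [hcomp]
    show MonoidAlgebra.ofCoeff (Finsupp.mapDomain _ x.coeff) = 0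
    rw [Finsupp.mapDomain_comp]
    have h4 : Finsupp.mapDomain (QuotientGroup.mk : G → G ⧸ P) x.coeff = 0 :=
      congrArg MonoidAlgebra.coeff hx
    rw [h4, Finsupp.mapDomain_zero]; rfl
  rwa [h3, sub_zero] at h2

end Ker



/-- A commutative ring with a nilpotent element generating a maximal ideal is a PIR. -/
lemma chain_pir {R : Type*} [CommRing R] {t : R} (ht : IsNilpotent t)
    (hmax : (Ideal.span {t}).IsMaximal) : IsPrincipalIdealRing R := by
  obtain ⟨N, hN⟩ := ht
  have hunit : ∀ c : R, c ∉ Ideal.span {t} → IsUnit c := by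
    intro c hc
    have hne : Ideal.span {t} ⊔ Ideal.span {c} ≠ Ideal.span {t} := by
      intro h2
      exact hc (h2 ▸ (le_sup_right : Ideal.span {c} ≤ _) (Ideal.subset_span rfl))
    have hsup : Ideal.span {t} ⊔ Ideal.span {c} = ⊤ :=
      hmax.1.2 _ (lt_of_le_of_ne le_sup_left (Ne.symm hne))
    have h1 : (1 : R) ∈ Ideal.span {t} ⊔ Ideal.span {c} := hsup ▸ Submodule.mem_top
    rw [Submodule.mem_sup] at h1
    obtain ⟨a, ha, b, hb, hab⟩ := h1
    rw [Ideal.mem_span_singleton] at ha hb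
    obtain ⟨a', rfl⟩ := ha
    obtain ⟨b', rfl⟩ := hb
    have hu : IsUnit (c * b') := by
      have h3 : c * b' = 1 - t * a' := by linear_combination hab
      rw [h3]
      exact IsNilpotent.isUnit_one_sub ⟨N, by rw [mul_pow, hN, zero_mul]⟩
    exact isUnit_of_mul_isUnit_left hu
  constructor
  intro I
  by_cases htop : I = ⊤
  · exact ⟨1, by simp [htop, Ideal.span_singleton_one]⟩
  have key : ∀ x : R, x ≠ 0 → ∃ k : ℕ, t ^ k ∈ Ideal.span {x} ∧ x ∈ Ideal.span {t ^ k} := by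
    intro x hx
    have hex : ∃ k, x ∉ Ideal.span {t ^ (k + 1)} := by
      refine ⟨N, ?_⟩
      have h0 : t ^ (N + 1) = 0 := by rw [pow_succ, hN, zero_mul]
      rw [h0]
      rw [Ideal.span_singleton_eq_bot.mpr rfl]
      simpa using hx
    classical
    let k := Nat.find hex
    have hk1 : x ∉ Ideal.span {t ^ (k + 1)} := Nat.find_spec hex
    have hk0 : x ∈ Ideal.span {t ^ k} := by
      rcases Nat.eq_zero_or_pos k with h0 | h0
      · rw [h0, pow_zero, Ideal.span_singleton_one]; trivial
      · have h5 := Nat.find_min hex (m := k - 1) (by omega)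
        simp only [not_not] at h5
        have hkk : k - 1 + 1 = k := by omega
        rwa [hkk] at h5
    obtain ⟨c, hc⟩ := Ideal.mem_span_singleton.mp hk0
    have hcu : IsUnit c := by
      apply hunit
      intro hcmem
      apply hk1
      obtain ⟨d, hd⟩ := Ideal.mem_span_singleton.mp hcmem
      rw [Ideal.mem_span_singleton, hc, hd, pow_succ]
      exact ⟨d, by ring⟩
    refine ⟨k, ?_, hk0⟩
    rw [Ideal.mem_span_singleton]
    obtain ⟨u, hu⟩ := hcu
    refine ⟨(u⁻¹ : Rˣ), ?_⟩
    rw [hc, ← hu, mul_assoc, Units.mul_inv, mul_one]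
  have hexk : ∃ k : ℕ, t ^ k ∈ I := ⟨N, by rw [hN]; exact I.zero_mem⟩
  classical
  refine ⟨⟨t ^ Nat.find hexk, ?_⟩⟩
  apply le_antisymm
  · intro x hxI
    by_cases hx0 : x = 0
    · simp [hx0]
    obtain ⟨k, hk1, hk2⟩ := key x hx0
    have htkI : t ^ k ∈ I := by
      obtain ⟨c, hc⟩ := Ideal.mem_span_singleton.mp hk1
      rw [hc]
      exact I.mul_mem_right c hxI
    have hKk : Nat.find hexk ≤ k := Nat.find_min' hexk htkI
    show x ∈ Ideal.span {t ^ Nat.find hexk}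
    rw [Ideal.mem_span_singleton]
    obtain ⟨c, hc⟩ := Ideal.mem_span_singleton.mp hk2
    exact ⟨t ^ (k - Nat.find hexk) * c, by rw [hc, ← mul_assoc, ← pow_add]; congr 2; omega⟩
  · show Ideal.span {t ^ Nat.find hexk} ≤ I
    rw [Ideal.span_singleton_le_iff_mem]
    exact Nat.find_spec hexk

/-- A finite product of commutative PIRs is a PIR. -/
lemma pi_pir {ι : Type*} [Finite ι] (R : ι → Type*) [∀ i, CommRing (R i)]
    [∀ i, IsPrincipalIdealRing (R i)] : IsPrincipalIdealRing (∀ i, R i) := by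
  cases nonempty_fintype ι
  classical
  constructor
  intro I
  -- component ideals
  have hproj : ∀ i, ∃ g : R i, I.map (Pi.evalRingHom R i) = Ideal.span {g} :=
    fun i => (IsPrincipalIdealRing.principal (I.map (Pi.evalRingHom R i))).principal
  choose g hg using hproj
  have hsurj : ∀ i, Function.Surjective (Pi.evalRingHom R i) :=
    fun i => Function.surjective_eval i
  have hgmem : ∀ i, ∃ y ∈ I, y i = g i := by
    intro i
    have : g i ∈ I.map (Pi.evalRingHom R i) := hg i ▸ Ideal.subset_span rfl
    obtain ⟨y, hy, hyi⟩ := (Ideal.mem_map_iff_of_surjective _ (hsurj i)).mp this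
    exact ⟨y, hy, hyi⟩
  choose y hyI hyi using hgmem
  set G : ∀ i, R i := fun i => g i with hG
  refine ⟨⟨G, le_antisymm ?_ ?_⟩⟩
  · intro x hx
    show x ∈ Ideal.span {G}
    rw [Ideal.mem_span_singleton]
    have hcomp : ∀ i, ∃ c : R i, x i = c * g i := by
      intro i
      have hxi : x i ∈ I.map (Pi.evalRingHom R i) :=
        Ideal.mem_map_of_mem _ hx
      rw [hg i, Ideal.mem_span_singleton] at hxi
      obtain ⟨c, hc⟩ := hxi
      exact ⟨c, by rw [hc, mul_comm]⟩
    choose c hc using hcomp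
    exact ⟨c, funext fun i => by rw [Pi.mul_apply]; rw [hc i]; ring⟩
  · show Ideal.span {G} ≤ I
    rw [Ideal.span_singleton_le_iff_mem]
    have hGsum : G = ∑ i, y i * Pi.single i 1 := by
      funext j
      rw [Finset.sum_apply]
      rw [Finset.sum_eq_single j]
      · simp [hG, hyi j]
      · intro b _ hbj
        simp [Pi.single_apply, hbj]
      · intro h; exact absurd (Finset.mem_univ j) h
    rw [hGsum]
    exact Ideal.sum_mem I fun i _ => I.mul_mem_right _ (hyI i)

/-- An artinian commutative ring whose nilradical is generated by one element is a PIR. -/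
lemma pir_of_radical {R : Type*} [CommRing R] [IsArtinianRing R] {t : R}
    (hnil : nilradical R = Ideal.span {t}) : IsPrincipalIdealRing R := by
  classical
  have ht : IsNilpotent t := by
    rw [← mem_nilradical, hnil]; exact Ideal.subset_span rfl
  set ι := MaximalSpectrum R with hι
  haveI : Finite ι := inferInstance
  haveI := Fintype.ofFinite ι
  letI : ∀ i : ι, Field (R ⧸ i.1) := IsArtinianRing.fieldOfSubtypeIsMaximal R
  set ψ := IsArtinianRing.quotNilradicalEquivPi R with hψ
  -- idempotents downstairs
  set ebar : ι → R ⧸ nilradical R := fun i => ψ.symm (Pi.single i 1) with hebar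
  have hcoi : CompleteOrthogonalIdempotents ebar := by
    have h1 := CompleteOrthogonalIdempotents.single (fun i : ι => R ⧸ i.1)
    have h2 := h1.map (ψ.symm : (∀ i : ι, R ⧸ i.1) →+* R ⧸ nilradical R)
    exact h2
  -- lift idempotents
  have hker : ∀ x ∈ RingHom.ker (Ideal.Quotient.mk (nilradical R)), IsNilpotent x := by
    intro x hx
    rw [RingHom.mem_ker, Ideal.Quotient.eq_zero_iff_mem] at hx
    exact hx
  obtain ⟨e, hcoie, hecomp⟩ := hcoi.lift_of_isNilpotent_ker _ hker
    (fun i => Ideal.Quotient.mk_surjective _)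
  -- product decomposition of R
  have hbij := hcoie.bijective_pi
  set σ := RingEquiv.ofBijective _ hbij with hσ
  -- each factor is a PIR
  haveI : ∀ i : ι, IsPrincipalIdealRing (R ⧸ Ideal.span {1 - e i}) := by
    intro i
    set Ri := R ⧸ Ideal.span {1 - e i}
    set tbar : Ri := Ideal.Quotient.mk _ t with htbar
    apply chain_pir (t := tbar)
    · exact ht.map _
    -- maximality
    have hval : ∀ j : ι, ψ (Ideal.Quotient.mk (nilradical R) (1 - e i)) j
        = if j = i then 0 else 1 := by
      intro j
      have h4 : Ideal.Quotient.mk (nilradical R) (e i) = ebar i := congr_fun hecomp i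
      rw [map_sub, map_one, h4, hebar]
      simp only [map_sub, map_one, RingEquiv.apply_symm_apply]
      by_cases hj : j = i
      · subst hj; simp [Pi.single_apply]
      · simp [Pi.single_apply, hj, Pi.one_apply, Pi.sub_apply]
    have hM : (Ideal.span {1 - e i} ⊔ Ideal.span {t}).IsMaximal := by
      have hkercomp : Ideal.span {1 - e i} ⊔ Ideal.span {t} =
          RingHom.ker (((Pi.evalRingHom (fun j : ι => R ⧸ j.1) i).comp
            (ψ : R ⧸ nilradical R →+* ∀ j : ι, R ⧸ j.1)).comp
              (Ideal.Quotient.mk (nilradical R))) := by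
        ext x
        rw [RingHom.mem_ker]
        constructor
        · intro hx
          rw [Submodule.mem_sup] at hx
          obtain ⟨a, ha, b, hb, rfl⟩ := hx
          rw [Ideal.mem_span_singleton] at ha hb
          obtain ⟨a', rfl⟩ := ha
          obtain ⟨b', rfl⟩ := hb
          have hb0 : Ideal.Quotient.mk (nilradical R) t = 0 := by
            rw [Ideal.Quotient.eq_zero_iff_mem, hnil]
            exact Ideal.subset_span rfl
          show (ψ (Ideal.Quotient.mk (nilradical R) ((1 - e i) * a' + t * b'))) i = 0
          simp only [_root_.map_add, _root_.map_mul, hb0, zero_mul, add_zero, Pi.add_apply,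
            Pi.mul_apply]
          rw [hval i, if_pos rfl, zero_mul]
        · intro hx
          replace hx : (ψ (Ideal.Quotient.mk (nilradical R) x)) i = 0 := hx
          have hx2 : ψ (Ideal.Quotient.mk (nilradical R) (x * (1 - e i)))
              = ψ (Ideal.Quotient.mk (nilradical R) x) := by
            rw [_root_.map_mul, _root_.map_mul]
            funext j
            rw [Pi.mul_apply, hval j]
            by_cases hj : j = i
            · subst hj; rw [if_pos rfl, mul_zero, hx]
            · rw [if_neg hj, mul_one]
          have hx3 : x - x * (1 - e i) ∈ nilradical R := by
            rw [← Ideal.Quotient.eq_zero_iff_mem, map_sub, sub_eq_zero]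
            exact ψ.injective hx2.symm
          rw [hnil] at hx3
          have hxsplit : x = x * (1 - e i) + (x - x * (1 - e i)) := by ring
          rw [hxsplit]
          apply Submodule.add_mem
          · exact Submodule.mem_sup_left (Ideal.mem_span_singleton.mpr ⟨x, mul_comm _ _⟩)
          · exact Submodule.mem_sup_right hx3
      rw [hkercomp]
      apply RingHom.ker_isMaximal_of_surjective
      exact (Function.surjective_eval i).comp (ψ.surjective.comp Ideal.Quotient.mk_surjective)
    -- transfer maximality to the quotient
    have hspan : Ideal.span {tbar} =
        Ideal.map (Ideal.Quotient.mk (Ideal.span {1 - e i})) (Ideal.span {t}) := by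
      rw [Ideal.map_span, Set.image_singleton]
    rw [hspan]
    have hisf : IsField (Ri ⧸ Ideal.map (Ideal.Quotient.mk (Ideal.span {1 - e i}))
        (Ideal.span {t})) := by
      haveI := hM
      letI : Field (R ⧸ (Ideal.span {1 - e i} ⊔ Ideal.span {t})) := Ideal.Quotient.field _
      exact MulEquiv.isField (Field.toIsField _)
        (DoubleQuot.quotQuotEquivQuotSup (Ideal.span {1 - e i}) (Ideal.span {t})).toMulEquiv
    exact Ideal.Quotient.maximal_of_isField _ hisf
  haveI := pi_pir (fun i : ι => R ⧸ Ideal.span {1 - e i})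
  exact IsPrincipalIdealRing.of_surjective σ.symm.toRingHom σ.symm.surjective

section Dual
variable {F G : Type*} [Field F] [CommGroup G] [Fintype G]

noncomputable def maB : LinearMap.BilinForm F (MonoidAlgebra F G) :=
  (LinearMap.mul F (MonoidAlgebra F G)).compr₂ ((Finsupp.lapply 1).comp (MonoidAlgebra.coeffLinearEquiv F).toLinearMap)

lemma maB_apply (x y : MonoidAlgebra F G) : maB x y = (x * y).coeff 1 := rfl

lemma maB_symm : (maB (F := F) (G := G)).IsSymm := by
  constructor
  intro x y
  simp [maB_apply, mul_comm]

lemma maB_nondeg : (maB (F := F) (G := G)).Nondegenerate := by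
  refine ⟨fun x hx => ?_, fun x hx => ?_⟩
  · exact ma_eq_zero_of_forall x hx
  · exact ma_eq_zero_of_forall x (fun z => by rw [mul_comm]; exact hx z)

/-- The annihilator of an ideal. -/
def annI (I : Ideal (MonoidAlgebra F G)) : Ideal (MonoidAlgebra F G) where
  carrier := {x | ∀ y ∈ I, x * y = 0}
  add_mem' := by
    intro a b ha hb
    intro y hy
    simp only [add_mul, ha y hy, hb y hy, add_zero]
  zero_mem' := by intro y hy; simp
  smul_mem' := by
    intro c x hx y hy
    simp only [smul_eq_mul, mul_assoc, hx y hy, mul_zero]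

lemma mem_annI {I : Ideal (MonoidAlgebra F G)} {x} :
    x ∈ annI I ↔ ∀ y ∈ I, x * y = 0 := Iff.rfl

lemma annI_span (u : MonoidAlgebra F G) : annI (Ideal.span {u}) = ann u := by
  ext x
  constructor
  · intro hx
    exact hx u (Ideal.subset_span rfl)
  · intro hx y hy
    rw [Ideal.mem_span_singleton] at hy
    obtain ⟨c, rfl⟩ := hy
    show x * (u * c) = 0
    rw [← mul_assoc, hx, zero_mul]

lemma annI_eq_orthogonal (I : Ideal (MonoidAlgebra F G)) :
    (annI I).restrictScalars F = maB.orthogonal (I.restrictScalars F) := by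
  ext x
  constructor
  · intro hx y hy
    show maB y x = 0
    rw [maB_apply, mul_comm, hx y hy, MonoidAlgebra.coeff_zero, Finsupp.coe_zero, Pi.zero_apply]
  · intro hx y hy
    apply ma_eq_zero_of_forall
    intro z
    have h1 : maB (y * z) x = 0 := hx (y * z) (Ideal.mul_mem_right z I hy)
    rw [maB_apply] at h1
    rw [show x * y * z = y * z * x by ring, h1]

lemma annI_annI (I : Ideal (MonoidAlgebra F G)) : annI (annI I) = I := by
  have hle : I ≤ annI (annI I) := by
    intro y hy x hx
    rw [mul_comm]
    exact hx y hy
  have hfr : ∀ J : Ideal (MonoidAlgebra F G),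
      Module.finrank F ((annI J).restrictScalars F) =
        Module.finrank F (MonoidAlgebra F G) - Module.finrank F (J.restrictScalars F) := by
    intro J
    rw [annI_eq_orthogonal]
    exact maB.finrank_orthogonal maB_nondeg _
  have h1 := hfr I
  have h2 := hfr (annI I)
  rw [h1, Nat.sub_sub_self (Submodule.finrank_le _)] at h2
  have : I.restrictScalars F = (annI (annI I)).restrictScalars F := by
    apply Submodule.eq_of_le_of_finrank_le
    · exact fun x hx => hle hx
    · rw [h2]
  exact (Submodule.restrictScalars_injective F _ _ this.symm)

end Dual

section Main

lemma ma_pir (F G : Type*) [Field F] [CommGroup G] [Fintype G] (p : ℕ) [Fact p.Prime] [CharP F p]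
    (hsyl : ∀ P : Sylow p G, IsCyclic P) : IsPrincipalIdealRing (MonoidAlgebra F G) := by
  classical
  let P : Sylow p G := default
  haveI : IsCyclic P := hsyl P
  obtain ⟨g₀, hg₀⟩ := IsCyclic.exists_generator (α := P)
  set g : G := (g₀ : G) with hgdef
  have hgmem : ∀ a : G, a ∈ (P : Subgroup G) ↔ a ∈ Subgroup.zpowers g := by
    intro a
    constructor
    · intro ha
      obtain ⟨k, hk⟩ := hg₀ ⟨a, ha⟩
      refine ⟨k, ?_⟩
      have h2 := congrArg (Subtype.val) hk
      simpa using h2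
    · rintro ⟨k, rfl⟩
      exact Subgroup.zpow_mem _ g₀.2 k
  haveI : CharP (MonoidAlgebra F G) p :=
    charP_of_injective_ringHom (algebraMap F (MonoidAlgebra F G)).injective p
  have hord : g ^ (p ^ (Nat.card G).factorization p) = 1 := by
    have h1 : g₀ ^ (Nat.card ↥(P : Subgroup G)) = 1 := pow_card_eq_one'
    have h2 := P.card_eq_multiplicity
    rw [h2] at h1
    have h3 := congrArg (Subtype.val) h1
    simpa using h3
  set t : MonoidAlgebra F G := MonoidAlgebra.single g 1 - 1 with hts
  have htnil : IsNilpotent t := by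
    refine ⟨p ^ (Nat.card G).factorization p, ?_⟩
    rw [hts, sub_pow_char_pow, one_pow, MonoidAlgebra.single_pow, one_pow, hord,
      ← MonoidAlgebra.one_def, sub_self]
  haveI : (P : Subgroup G).Normal := Subgroup.normal_of_comm _
  have hcardQ : ¬ (p ∣ Nat.card (G ⧸ (P : Subgroup G))) := by
    have h4 := P.not_dvd_index
    simpa [Subgroup.index] using h4
  haveI : Fintype (G ⧸ (P : Subgroup G)) := Fintype.ofFinite _
  have hcardQF : (Fintype.card (G ⧸ (P : Subgroup G)) : F) ≠ 0 := by
    intro h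
    rw [CharP.cast_eq_zero_iff F p] at h
    exact hcardQ (by rwa [Nat.card_eq_fintype_card])
  have hnilrad : nilradical (MonoidAlgebra F G) = Ideal.span {t} := by
    apply le_antisymm
    · intro x hx
      have hxnil : IsNilpotent x := hx
      have h5 : IsNilpotent (MonoidAlgebra.mapDomainRingHom F
          (QuotientGroup.mk' (P : Subgroup G)) x) := hxnil.map _
      have h6 := ma_isNilpotent_eq_zero hcardQF _ h5
      exact ma_ker_le_span _ g hgmem x h6
    · rw [Ideal.span_le, Set.singleton_subset_iff]
      exact mem_nilradical.mpr htnil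
  haveI : IsArtinianRing (MonoidAlgebra F G) :=
    isArtinian_of_tower F (isArtinian_of_fg_of_artinian' (M := MonoidAlgebra F G))
  exact pir_of_radical hnilrad

end Main

theorem stmt_19 (F G : Type*) [Field F] [Fintype F] [CommGroup G] [Fintype G]
    (p : ℕ) [Fact p.Prime] [CharP F p]
    (hsyl : ∀ P : Sylow p G, IsCyclic P) :
    ∀ I : Ideal (MonoidAlgebra F G), ∃ u v : MonoidAlgebra F G,
      I = Ideal.span {u} ∧ ann u = Ideal.span {v} ∧ ann v = Ideal.span {u} := by
  intro I
  haveI hpir : IsPrincipalIdealRing (MonoidAlgebra F G) := ma_pir F G p hsyl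
  obtain ⟨u, hu⟩ := (IsPrincipalIdealRing.principal I).principal
  obtain ⟨v, hv⟩ := (IsPrincipalIdealRing.principal (ann u)).principal
  rw [Ideal.submodule_span_eq] at hu hv
  refine ⟨u, v, hu, hv, ?_⟩
  rw [← annI_span v, ← hv, ← annI_span u, annI_annI]
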